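/- Invariance of effective conductance under Kron reduction: let L be a loop-less Laplacian, {a,b} ⊂ α ⊊ [n] with {a,b} a reachable subset. Then (L/L[{a,b}ᶜ,{a,b}ᶜ])_{aa} = (L_red/L_red[{a,b}ᶜ∩α,{a,b}ᶜ∩α])_{aa}, where L_red = L/L[αᶜ,αᶜ]. -/

import Mathlib

open Matrix Finset

/-- The submatrix of `A` with rows in `s` and columns in `t`. -/
noncomputable def subm {ι : Type*} [Fintype ι] [DecidableEq ι]
    (A : Matrix ι ι ℝ) (s t : Finset ι) : Matrix s t ℝ :=
  Matrix.of fun i j => A i j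

/-- The Schur complement `A/A[αᶜ,αᶜ]`, i.e. the Kron reduction keeping the nodes of `α`. -/
noncomputable def schur {ι : Type*} [Fintype ι] [DecidableEq ι]
    (A : Matrix ι ι ℝ) (α : Finset ι) : Matrix α α ℝ :=
  subm A α α - subm A α αᶜ * (subm A αᶜ αᶜ)⁻¹ * subm A αᶜ α

/-- The loopy Laplacian `Q = D - A + diag(Aᵢᵢ)` of the graph with adjacency matrix `A`. -/
noncomputable def loopyLap {n : ℕ} (A : Matrix (Fin n) (Fin n) ℝ) : Matrix (Fin n) (Fin n) ℝ :=
  Matrix.of fun i j => if i = j then ∑ k, A i k else -A i j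

/-- The loop-less Laplacian `L = D - A` of the graph with adjacency matrix `A`. -/
noncomputable def looplessLap {n : ℕ} (A : Matrix (Fin n) (Fin n) ℝ) : Matrix (Fin n) (Fin n) ℝ :=
  Matrix.of fun i j => if i = j then (∑ k, A i k) - A i i else -A i j

/-- `α` is a reachable subset: every interior node has a directed path to some boundary node. -/
def ReachableSubset {n : ℕ} (A : Matrix (Fin n) (Fin n) ℝ) (α : Finset (Fin n)) : Prop :=
  ∀ i ∉ α, ∃ j ∈ α, Relation.ReflTransGen (fun u v => 0 < A u v) i j

section helpers
variable {ι : Type*} [Fintype ι] [DecidableEq ι]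

lemma sum_split (β : Finset ι) (g : ι → ℝ) :
    ∑ k, g k = (∑ k : β, g k) + ∑ k : ↥(βᶜ : Finset ι), g k := by
  rw [Finset.sum_coe_sort, Finset.sum_coe_sort, Finset.sum_add_sum_compl]

lemma mulVec_split (M : Matrix ι ι ℝ) (β : Finset ι) (v : ι → ℝ) (i : ι) :
    M.mulVec v i = (∑ k : β, M i k * v k) + ∑ k : ↥(βᶜ : Finset ι), M i k * v k := by
  simpa [Matrix.mulVec, dotProduct] using sum_split β (fun k => M i k * v k)

/-- Key transfer lemma. -/
lemma schur_mulVec (M : Matrix ι ι ℝ) (β : Finset ι)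
    (hinv : IsUnit (subm M βᶜ βᶜ).det)
    (v : ι → ℝ) (hv : ∀ j ∉ β, M.mulVec v j = 0)
    (i : ι) (hi : i ∈ β) :
    (schur M β).mulVec (fun k : β => v k) ⟨i, hi⟩ = M.mulVec v i := by
  set B := subm M βᶜ βᶜ with hB
  have h1 : (subm M βᶜ β).mulVec (fun k : β => v k)
      = -(B.mulVec (fun k : ↥(βᶜ : Finset ι) => v k)) := by
    funext j
    have hj0 : M.mulVec v (j : ι) = 0 := hv _ (Finset.mem_compl.mp j.2)
    have := mulVec_split M β v (j : ι)
    rw [hj0] at this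
    simp only [Pi.neg_apply, Matrix.mulVec, dotProduct, subm, Matrix.of_apply, hB]
    linarith [this]
  have h2 : (subm M β βᶜ * B⁻¹ * subm M βᶜ β).mulVec (fun k : β => v k)
      = (subm M β βᶜ).mulVec (fun k : ↥(βᶜ : Finset ι) => -(v k)) := by
    rw [← Matrix.mulVec_mulVec, ← Matrix.mulVec_mulVec, h1]
    congr 1
    rw [Matrix.mulVec_neg, Matrix.mulVec_mulVec, Matrix.nonsing_inv_mul B hinv,
      Matrix.one_mulVec]
    rfl
  have h3 : (schur M β).mulVec (fun k : β => v k) ⟨i, hi⟩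
      = (subm M β β).mulVec (fun k : β => v k) ⟨i, hi⟩
        + (subm M β βᶜ).mulVec (fun k : ↥(βᶜ : Finset ι) => v k) ⟨i, hi⟩ := by
    rw [schur, Matrix.sub_mulVec]
    simp only [Pi.sub_apply, ← hB, h2]
    have : (subm M β βᶜ).mulVec (fun k : ↥(βᶜ : Finset ι) => -(v k)) ⟨i, hi⟩
        = -((subm M β βᶜ).mulVec (fun k : ↥(βᶜ : Finset ι) => v k) ⟨i, hi⟩) := by
      simp [Matrix.mulVec, dotProduct, Finset.sum_neg_distrib]
    rw [this]; ring
  rw [h3, mulVec_split M β v i]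
  simp [Matrix.mulVec, dotProduct, subm]

end helpers

section helpers2
variable {ι : Type*} [Fintype ι] [DecidableEq ι]

/-- Existence of the harmonic extension with given boundary values. -/
lemma exists_extension (M : Matrix ι ι ℝ) (β : Finset ι)
    (hinv : IsUnit (subm M βᶜ βᶜ).det) (g : ↥β → ℝ) :
    ∃ v : ι → ℝ, (∀ k (h : k ∈ β), v k = g ⟨k, h⟩) ∧ ∀ j ∉ β, M.mulVec v j = 0 := by
  set B := subm M βᶜ βᶜ with hB
  set c : ↥(βᶜ : Finset ι) → ℝ := (subm M βᶜ β).mulVec g with hc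
  refine ⟨fun k => if h : k ∈ β then g ⟨k, h⟩
    else -((B⁻¹.mulVec c) ⟨k, Finset.mem_compl.mpr h⟩), fun k h => by simp [h], ?_⟩
  intro j hj
  rw [mulVec_split M β _ j]
  have e1 : (∑ k : β, M j k * (if h : (k:ι) ∈ β then g ⟨k, h⟩
      else -((B⁻¹.mulVec c) ⟨k, Finset.mem_compl.mpr h⟩))) = c ⟨j, Finset.mem_compl.mpr hj⟩ := by
    rw [hc]
    simp only [Matrix.mulVec, dotProduct, subm, Matrix.of_apply]
    exact Finset.sum_congr rfl fun k _ => by rw [dif_pos k.2]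
  have e2 : (∑ k : ↥(βᶜ : Finset ι), M j k * (if h : (k:ι) ∈ β then g ⟨k, h⟩
      else -((B⁻¹.mulVec c) ⟨k, Finset.mem_compl.mpr h⟩)))
      = -c ⟨j, Finset.mem_compl.mpr hj⟩ := by
    have : (∑ k : ↥(βᶜ : Finset ι), M j k * (if h : (k:ι) ∈ β then g ⟨k, h⟩
        else -((B⁻¹.mulVec c) ⟨k, Finset.mem_compl.mpr h⟩)))
        = (B.mulVec (-(B⁻¹.mulVec c))) ⟨j, Finset.mem_compl.mpr hj⟩ := by
      simp only [Matrix.mulVec, dotProduct, subm, Matrix.of_apply, hB]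
      refine Finset.sum_congr rfl fun k _ => ?_
      have hk : (k:ι) ∉ β := Finset.mem_compl.mp k.2
      rw [dif_neg hk]
      simp only [Pi.neg_apply, Subtype.coe_eta]
      rfl
    rw [this, Matrix.mulVec_neg, Matrix.mulVec_mulVec, Matrix.mul_nonsing_inv B hinv,
      Matrix.one_mulVec, Pi.neg_apply]
  rw [e1, e2]; ring

/-- Extraction of a diagonal entry via mulVec with an indicator vector. -/
lemma mulVec_indicator (β : Finset ι) (N : Matrix ↥β ↥β ℝ) (a : ι) (ha : a ∈ β)
    (x : ↥β → ℝ) (hx : ∀ k : ↥β, x k = if (k:ι) = a then 1 else 0) :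
    N.mulVec x ⟨a, ha⟩ = N ⟨a, ha⟩ ⟨a, ha⟩ := by
  simp only [Matrix.mulVec, dotProduct]
  rw [Finset.sum_eq_single (⟨a, ha⟩ : ↥β)]
  · rw [hx]; simp
  · intro k _ hk
    rw [hx]
    have : (k:ι) ≠ a := fun h => hk (Subtype.ext h)
    simp [this]
  · simp

end helpers2

lemma looplessLap_eq {n : ℕ} (A : Matrix (Fin n) (Fin n) ℝ) (u v : Fin n) :
    looplessLap A u v = (if u = v then ∑ m, A u m else 0) - A u v := by
  simp only [looplessLap, Matrix.of_apply]
  split <;> simp_all <;> ring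

/-- Invertibility of principal submatrices of the loop-less Laplacian via reachability. -/
lemma lap_subm_isUnit {n : ℕ} (A : Matrix (Fin n) (Fin n) ℝ) (hA : ∀ i j, 0 ≤ A i j)
    (S : Finset (Fin n))
    (hS : ∀ i ∈ S, ∃ j ∉ S, Relation.ReflTransGen (fun u v => 0 < A u v) i j) :
    IsUnit (subm (looplessLap A) S S).det := by
  rw [isUnit_iff_ne_zero]
  intro hdet
  obtain ⟨x, hx0, hker⟩ := (Matrix.exists_mulVec_eq_zero_iff).mpr hdet
  -- pick a coordinate of maximal absolute value
  obtain ⟨i₀, -, hmax⟩ := Finset.exists_max_image (Finset.univ : Finset ↥S)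
    (fun k => |x k|) (by
      obtain ⟨k, hk⟩ := Function.ne_iff.mp hx0
      exact ⟨k, Finset.mem_univ k⟩)
  set M : ℝ := |x i₀| with hM
  have hMpos : 0 < M := by
    obtain ⟨k, hk⟩ := Function.ne_iff.mp hx0
    calc (0:ℝ) < |x k| := abs_pos.mpr hk
    _ ≤ M := hmax k (Finset.mem_univ k)
  -- normalize sign
  set y : ↥S → ℝ := if 0 ≤ x i₀ then x else -x with hy
  have hky : (subm (looplessLap A) S S).mulVec y = 0 := by
    rw [hy]; split
    · exact hker
    · rw [Matrix.mulVec_neg, hker, neg_zero]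
  have hyi₀ : y i₀ = M := by
    rw [hy, hM]; split
    · exact (abs_of_nonneg (by assumption)).symm
    · simp only [Pi.neg_apply]
      rw [abs_of_neg (lt_of_not_ge (by assumption))]
  have hybd : ∀ k, y k ≤ M := by
    intro k
    have h1 : |y k| = |x k| := by rw [hy]; split <;> simp
    calc y k ≤ |y k| := le_abs_self _
    _ = |x k| := h1
    _ ≤ M := hmax k (Finset.mem_univ k)
  -- propagate the maximum along edges
  have hprop : ∀ j : Fin n, Relation.ReflTransGen (fun u v => 0 < A u v) (i₀ : Fin n) j →
      ∃ hj : j ∈ S, y ⟨j, hj⟩ = M := by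
    intro j hpath
    induction hpath with
    | refl => exact ⟨i₀.2, by rw [Subtype.coe_eta]; exact hyi₀⟩
    | @tail j' j hstep hAedge ih =>
      obtain ⟨hj'S, hyj'⟩ := ih
      -- the row equation at j'
      have row : ∑ k : ↥S, looplessLap A j' (k : Fin n) * y k = 0 :=
        congrFun hky ⟨j', hj'S⟩
      set w : Fin n → ℝ := fun k => if h : k ∈ S then y ⟨k, h⟩ else 0 with hw
      have hwbd : ∀ k, w k ≤ M := by
        intro k; rw [hw]; dsimp only
        split
        · exact hybd _
        · exact le_of_lt hMpos
      have key : ∑ k : Fin n, A j' k * (M - w k) = 0 := by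
        have hsum1 : ∑ k : ↥S, (if (j' : Fin n) = (k : Fin n) then ∑ m, A j' m else 0) * y k
            = (∑ m, A j' m) * M := by
          rw [Finset.sum_eq_single (⟨j', hj'S⟩ : ↥S)]
          · rw [if_pos rfl, hyj']
          · intro k _ hk
            rw [if_neg (fun h => hk (Subtype.ext h.symm)), zero_mul]
          · simp
        have hsum2 : ∑ k : ↥S, A j' (k : Fin n) * y k = ∑ k : Fin n, A j' k * w k := by
          rw [sum_split S (fun k => A j' k * w k)]
          have z2 : ∑ k : ↥(Sᶜ : Finset (Fin n)), A j' (k:Fin n) * w k = 0 := by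
            apply Finset.sum_eq_zero
            intro k _
            have : (k : Fin n) ∉ S := Finset.mem_compl.mp k.2
            rw [hw]; dsimp only; rw [dif_neg this, mul_zero]
          rw [z2, add_zero]
          exact Finset.sum_congr rfl fun k _ => by rw [hw]; dsimp only; rw [dif_pos k.2]
        have expand : ∑ k : ↥S, looplessLap A j' (k : Fin n) * y k
            = (∑ m, A j' m) * M - ∑ k : Fin n, A j' k * w k := by
          rw [← hsum1, ← hsum2, ← Finset.sum_sub_distrib]
          exact Finset.sum_congr rfl fun k _ => by rw [looplessLap_eq]; ring
        rw [expand] at row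
        have hexp2 : ∑ k : Fin n, A j' k * (M - w k)
            = (∑ m, A j' m) * M - ∑ k : Fin n, A j' k * w k := by
          rw [Finset.sum_mul, ← Finset.sum_sub_distrib]
          exact Finset.sum_congr rfl fun k _ => by ring
        rw [hexp2]
        exact row
      have nonneg : ∀ k ∈ (Finset.univ : Finset (Fin n)), 0 ≤ A j' k * (M - w k) :=
        fun k _ => mul_nonneg (hA _ _) (sub_nonneg.mpr (hwbd k))
      have term0 : A j' j * (M - w j) = 0 :=
        (Finset.sum_eq_zero_iff_of_nonneg nonneg).mp key j (Finset.mem_univ j)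
      have hwj : w j = M := by
        rcases mul_eq_zero.mp term0 with h | h
        · exact absurd h (ne_of_gt hAedge)
        · linarith
      by_cases hjS : j ∈ S
      · refine ⟨hjS, ?_⟩
        rw [hw] at hwj; dsimp only at hwj; rwa [dif_pos hjS] at hwj
      · exfalso
        rw [hw] at hwj; dsimp only at hwj; rw [dif_neg hjS] at hwj
        exact absurd hwj.symm (ne_of_gt hMpos)
  obtain ⟨j, hjS, hpath⟩ := hS (i₀ : Fin n) i₀.2
  obtain ⟨hjS', -⟩ := hprop j hpath
  exact hjS hjS'


section main
variable {n : ℕ} (A : Matrix (Fin n) (Fin n) ℝ)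

set_option maxHeartbeats 1000000 in
/-- Invertibility of the interior block of the Kron-reduced matrix. -/
lemma red_isUnit (hA : ∀ i j, 0 ≤ A i j) (a b : Fin n)
    (α : Finset (Fin n)) (ha : a ∈ α) (hb : b ∈ α)
    (hreach : ReachableSubset A {a, b}) :
    IsUnit (subm (schur (looplessLap A) α)
      ({⟨a, ha⟩, ⟨b, hb⟩} : Finset ↥α)ᶜ ({⟨a, ha⟩, ⟨b, hb⟩} : Finset ↥α)ᶜ).det := by
  set L := looplessLap A with hL
  set β : Finset (Fin n) := {a, b} with hβ
  set β' : Finset ↥α := {⟨a, ha⟩, ⟨b, hb⟩} with hβ'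
  have hβα : β ⊆ α := by
    intro x hx
    rcases Finset.mem_insert.mp hx with h | h
    · exact h ▸ ha
    · exact (Finset.mem_singleton.mp h) ▸ hb
  have hmemβ' : ∀ k : ↥α, k ∈ β' ↔ (k : Fin n) ∈ β := by
    intro k
    simp [hβ', hβ, Finset.mem_insert, Finset.mem_singleton, Subtype.ext_iff]
  have hinv1 : IsUnit (subm L βᶜ βᶜ).det := by
    apply lap_subm_isUnit A hA
    intro i hi
    obtain ⟨j, hjβ, hp⟩ := hreach i (Finset.mem_compl.mp hi)
    exact ⟨j, by simp [hjβ], hp⟩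
  have hinv2 : IsUnit (subm L αᶜ αᶜ).det := by
    apply lap_subm_isUnit A hA
    intro i hi
    obtain ⟨j, hjβ, hp⟩ := hreach i (fun h => Finset.mem_compl.mp hi (hβα h))
    exact ⟨j, by simp [hβα hjβ], hp⟩
  rw [isUnit_iff_ne_zero]
  intro hdet
  obtain ⟨x, hx0, hker⟩ := Matrix.exists_mulVec_eq_zero_iff.mpr hdet
  set g : ↥α → ℝ := fun k => if h : k ∈ β'ᶜ then x ⟨k, h⟩ else 0 with hg
  have hg0 : ∀ j' ∉ β', (schur L α).mulVec g j' = 0 := by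
    intro j' hj'
    rw [mulVec_split (schur L α) β' g j']
    have z1 : (∑ k : ↥β', (schur L α) j' (k : ↥α) * g k) = 0 := by
      apply Finset.sum_eq_zero
      intro k _
      have : (k : ↥α) ∉ β'ᶜ := by simp [k.2]
      rw [hg]; dsimp only; rw [dif_neg this, mul_zero]
    have z2 : (∑ k : ↥(β'ᶜ : Finset ↥α), (schur L α) j' (k : ↥α) * g k)
        = (subm (schur L α) β'ᶜ β'ᶜ).mulVec x ⟨j', Finset.mem_compl.mpr hj'⟩ := by
      simp only [Matrix.mulVec, dotProduct, subm, Matrix.of_apply]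
      refine Finset.sum_congr rfl fun k _ => ?_
      rw [hg]; dsimp only; rw [dif_pos k.2, Subtype.coe_eta]
    rw [z1, z2, hker]
    simp
  obtain ⟨v, hvα, hv0⟩ := exists_extension L α hinv2 g
  have hvg : (fun k : ↥α => v (k : Fin n)) = g := funext fun k => hvα (k : Fin n) k.2
  have hLv : ∀ i (hiα : i ∈ α), (schur L α).mulVec g ⟨i, hiα⟩ = L.mulVec v i := by
    intro i hiα
    rw [← hvg]
    exact schur_mulVec L α hinv2 v hv0 i hiα
  have hLv0 : ∀ j ∉ β, L.mulVec v j = 0 := by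
    intro j hj
    by_cases hjα : j ∈ α
    · rw [← hLv j hjα]
      exact hg0 _ (fun hmem => hj ((hmemβ' ⟨j, hjα⟩).mp hmem))
    · exact hv0 j hjα
  have hvβ : ∀ k, k ∈ β → v k = 0 := by
    intro k h
    rw [hvα k (hβα h), hg]
    dsimp only
    rw [dif_neg (by simp [(hmemβ' ⟨k, hβα h⟩).mpr h])]
  have hkerB : (subm L βᶜ βᶜ).mulVec (fun k : ↥(βᶜ : Finset (Fin n)) => v (k : Fin n)) = 0 := by
    funext j
    have h0 : L.mulVec v (j : Fin n) = 0 := hLv0 _ (Finset.mem_compl.mp j.2)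
    rw [mulVec_split L β v (j : Fin n)] at h0
    have z1 : (∑ k : ↥β, L (j : Fin n) (k : Fin n) * v (k : Fin n)) = 0 :=
      Finset.sum_eq_zero fun k _ => by rw [hvβ _ k.2, mul_zero]
    rw [z1, zero_add] at h0
    simpa [Matrix.mulVec, dotProduct, subm] using h0
  have hv0' : (fun k : ↥(βᶜ : Finset (Fin n)) => v (k : Fin n)) = 0 := by
    have h1 := congrArg (fun u => (subm L βᶜ βᶜ)⁻¹.mulVec u) hkerB
    simpa [Matrix.mulVec_mulVec, Matrix.nonsing_inv_mul _ hinv1] using h1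
  apply hx0
  funext k
  have hk1 : (k : ↥α) ∉ β' := Finset.mem_compl.mp k.2
  have hk2 : ((k : ↥α) : Fin n) ∈ βᶜ :=
    Finset.mem_compl.mpr (fun h => hk1 ((hmemβ' _).mpr h))
  have : x k = g (k : ↥α) := by rw [hg]; dsimp only; rw [dif_pos k.2, Subtype.coe_eta]
  have hvk : v (((k : ↥α)) : Fin n) = 0 := congrFun hv0' ⟨_, hk2⟩
  have h2 : g (k : ↥α) = v (((k : ↥α)) : Fin n) := by
    rw [hvα _ (k : ↥α).2, Subtype.coe_eta]
  rw [this, h2, hvk]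
  simp

end main


theorem effective_conductance_invariant {n : ℕ} (A : Matrix (Fin n) (Fin n) ℝ)
    (hA : ∀ i j, 0 ≤ A i j) (a b : Fin n) (hab : a ≠ b)
    (α : Finset (Fin n)) (ha : a ∈ α) (hb : b ∈ α) (hα : α ≠ Finset.univ)
    (hreach : ReachableSubset A {a, b}) :
    schur (looplessLap A) {a, b} ⟨a, Finset.mem_insert_self a {b}⟩ ⟨a, Finset.mem_insert_self a {b}⟩
      = schur (schur (looplessLap A) α) ({⟨a, ha⟩, ⟨b, hb⟩} : Finset ↥α)
          ⟨⟨a, ha⟩, Finset.mem_insert_self (⟨a, ha⟩ : ↥α) {⟨b, hb⟩}⟩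
          ⟨⟨a, ha⟩, Finset.mem_insert_self (⟨a, ha⟩ : ↥α) {⟨b, hb⟩}⟩ := by
  set L := looplessLap A with hL
  set β : Finset (Fin n) := {a, b} with hβ
  set β' : Finset ↥α := {⟨a, ha⟩, ⟨b, hb⟩} with hβ'
  have haβ : a ∈ β := Finset.mem_insert_self a {b}
  have ha' : (⟨a, ha⟩ : ↥α) ∈ β' := Finset.mem_insert_self _ _
  have hβα : β ⊆ α := by
    intro x hx
    rcases Finset.mem_insert.mp hx with h | h
    · exact h ▸ ha
    · exact (Finset.mem_singleton.mp h) ▸ hb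
  have hmemβ' : ∀ k : ↥α, k ∈ β' ↔ (k : Fin n) ∈ β := by
    intro k
    simp [hβ', hβ, Finset.mem_insert, Finset.mem_singleton, Subtype.ext_iff]
  have hinv1 : IsUnit (subm L βᶜ βᶜ).det := by
    apply lap_subm_isUnit A hA
    intro i hi
    obtain ⟨j, hjβ, hp⟩ := hreach i (Finset.mem_compl.mp hi)
    exact ⟨j, by simp [hjβ], hp⟩
  have hinv2 : IsUnit (subm L αᶜ αᶜ).det := by
    apply lap_subm_isUnit A hA
    intro i hi
    obtain ⟨j, hjβ, hp⟩ := hreach i (fun h => Finset.mem_compl.mp hi (hβα h))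
    exact ⟨j, by simp [hβα hjβ], hp⟩
  have hinv3 : IsUnit (subm (schur L α) β'ᶜ β'ᶜ).det :=
    red_isUnit A hA a b α ha hb hreach
  -- harmonic extension with boundary value the indicator of a
  set g₀ : ↥β → ℝ := fun k => if (k : Fin n) = a then 1 else 0 with hg₀
  obtain ⟨v, hvβ, hv0⟩ := exists_extension L β hinv1 g₀
  have hvind : ∀ k : ↥β, v (k : Fin n) = if ((k : Fin n) : Fin n) = a then 1 else 0 :=
    fun k => by rw [hvβ _ k.2]
  -- LHS
  have lhs : schur L β ⟨a, haβ⟩ ⟨a, haβ⟩ = L.mulVec v a := by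
    rw [← mulVec_indicator β (schur L β) a haβ (fun k : ↥β => v (k : Fin n)) hvind]
    exact schur_mulVec L β hinv1 v hv0 a haβ
  -- RHS
  set vα : ↥α → ℝ := fun k => v (k : Fin n) with hvα
  have hv0' : ∀ j ∉ α, L.mulVec v j = 0 := fun j hj => hv0 j (fun h => hj (hβα h))
  have hred : ∀ j' ∉ β', (schur L α).mulVec vα j' = 0 := by
    intro j' hj'
    have h1 : (schur L α).mulVec vα ⟨(j' : Fin n), j'.2⟩ = L.mulVec v (j' : Fin n) :=
      schur_mulVec L α hinv2 v hv0' (j' : Fin n) j'.2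
    rw [Subtype.coe_eta] at h1
    rw [h1]
    exact hv0 _ (fun h => hj' ((hmemβ' j').mpr h))
  have hmid : (schur L α).mulVec vα ⟨a, ha⟩ = L.mulVec v a :=
    schur_mulVec L α hinv2 v hv0' a ha
  have hvind' : ∀ k : ↥β', vα (k : ↥α) = if ((k : ↥β') : ↥α) = ⟨a, ha⟩ then 1 else 0 := by
    intro k
    have hkβ : ((k : ↥α) : Fin n) ∈ β := (hmemβ' _).mp k.2
    have : vα (k : ↥α) = if (((k : ↥α) : Fin n)) = a then 1 else 0 := by
      rw [hvα]; dsimp only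
      rw [hvβ _ hkβ]
    rw [this]
    congr 1
    simp [Subtype.ext_iff]
  have rhs : schur (schur L α) β' ⟨⟨a, ha⟩, ha'⟩ ⟨⟨a, ha⟩, ha'⟩ = L.mulVec v a := by
    rw [← mulVec_indicator β' (schur (schur L α) β') ⟨a, ha⟩ ha'
      (fun k : ↥β' => vα (k : ↥α)) hvind']
    rw [schur_mulVec (schur L α) β' hinv3 vα hred ⟨a, ha⟩ ha']
    exact hmid
  rw [lhs.trans rhs.symm]
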